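/- Let C₁, C₂ be two disjoint chains with chain-successor edges and H a set of horizontal edges. A subset S ⊆ H is safely updatable (the graph of chain-successor edges plus S is acyclic) if and only if S is an independent set in the crossing graph G'. Consequently, a maximum safely-updatable subset of H has size |H| minus the size of a minimum vertex cover of G'. -/

import Mathlib

/-- A directed simple cycle in the digraph given by relation `r`. -/
def IsCycle {V : Type*} (r : V → V → Prop) (l : List V) : Prop :=
  l ≠ [] ∧ l.Nodup ∧
    ∀ i : Fin l.length, r (l.get i) (l.get ⟨((i : ℕ) + 1) % l.length, Nat.mod_lt _ i.pos⟩)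

/-- Chain-successor edges of two disjoint chains `C₁ = Fin m` and `C₂ = Fin k`. -/
def chainEdge {m k : ℕ} : Fin m ⊕ Fin k → Fin m ⊕ Fin k → Prop
  | Sum.inl i, Sum.inl j => (i : ℕ) + 1 = (j : ℕ)
  | Sum.inr i, Sum.inr j => (i : ℕ) + 1 = (j : ℕ)
  | _, _ => False

/-- Two horizontal edges cross if the chain edges plus the two of them contain a
directed cycle. -/
def Crosses {m k : ℕ} (h₁ h₂ : (Fin m ⊕ Fin k) × (Fin m ⊕ Fin k)) : Prop :=
  ∃ l, IsCycle (fun a b => chainEdge a b ∨ (a, b) = h₁ ∨ (a, b) = h₂) l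

/-- A set `S` of horizontal edges is safely updatable if the chain-successor
edges together with `S` form an acyclic digraph. -/
def Safe {m k : ℕ} (S : Finset ((Fin m ⊕ Fin k) × (Fin m ⊕ Fin k))) : Prop :=
  ∀ l, ¬ IsCycle (fun a b => chainEdge a b ∨ (a, b) ∈ S) l

lemma isCycle_mono {V : Type*} {r r' : V → V → Prop} (h : ∀ a b, r a b → r' a b)
    {l : List V} (hc : IsCycle r l) : IsCycle r' l :=
  ⟨hc.1, hc.2.1, fun i => h _ _ (hc.2.2 i)⟩

lemma isCycle_ofFn {V : Type*} (r : V → V → Prop) {n : ℕ} (hn : 0 < n) (f : Fin n → V)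
    (hinj : Function.Injective f)
    (hr : ∀ i : Fin n, r (f i) (f ⟨((i : ℕ) + 1) % n, Nat.mod_lt _ hn⟩)) :
    IsCycle r (List.ofFn f) := by
  refine ⟨by simp [← List.length_pos_iff_ne_nil, hn]; omega, List.nodup_ofFn.mpr hinj, ?_⟩
  intro i
  have hlen : (List.ofFn f).length = n := List.length_ofFn
  rw [List.get_ofFn, List.get_ofFn]
  convert hr (Fin.cast hlen i) using 2
  all_goals simp [Fin.ext_iff, hlen]

section Escape

variable {m k : ℕ} {S H : Finset ((Fin m ⊕ Fin k) × (Fin m ⊕ Fin k))}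

lemma escape_right (hSH : S ⊆ H)
    (hH : ∀ e ∈ H, (e.1.isLeft = true ∧ e.2.isRight = true) ∨
                   (e.1.isRight = true ∧ e.2.isLeft = true))
    {l : List (Fin m ⊕ Fin k)}
    (hr : ∀ i : Fin l.length, chainEdge (l.get i)
        (l.get ⟨((i : ℕ) + 1) % l.length, Nat.mod_lt _ i.pos⟩) ∨
      (l.get i, l.get ⟨((i : ℕ) + 1) % l.length, Nat.mod_lt _ i.pos⟩) ∈ S)
    (p : Fin l.length) (z : Fin k) (hp : l.get p = Sum.inr z) :
    ∃ (q : Fin l.length) (z' : Fin k) (x' : Fin m),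
      l.get q = Sum.inr z' ∧
      l.get ⟨((q : ℕ) + 1) % l.length, Nat.mod_lt _ q.pos⟩ = Sum.inl x' ∧
      (z : ℕ) ≤ z' ∧ (Sum.inr z', Sum.inl x') ∈ S := by
  have hpos : 0 < l.length := p.pos
  have claim : ∀ t : ℕ,
      (∃ (q : Fin l.length) (z' : Fin k) (x' : Fin m),
        l.get q = Sum.inr z' ∧
        l.get ⟨((q : ℕ) + 1) % l.length, Nat.mod_lt _ q.pos⟩ = Sum.inl x' ∧
        (z : ℕ) ≤ z' ∧ (Sum.inr z', Sum.inl x') ∈ S) ∨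
      (∃ w : Fin k, l.get ⟨((p : ℕ) + t) % l.length, Nat.mod_lt _ hpos⟩ = Sum.inr w ∧
        (z : ℕ) + t ≤ (w : ℕ)) := by
    intro t
    induction t with
    | zero =>
        right
        refine ⟨z, ?_, by omega⟩
        have he : (⟨((p : ℕ) + 0) % l.length, Nat.mod_lt _ hpos⟩ : Fin l.length) = p :=
          Fin.ext (by simpa using Nat.mod_eq_of_lt p.isLt)
        rw [he]; exact hp
    | succ t ih =>
        rcases ih with h | ⟨w, hw, hzw⟩
        · exact Or.inl h
        · set q' : Fin l.length := ⟨((p : ℕ) + t) % l.length, Nat.mod_lt _ hpos⟩ with hq'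
          have hsucc : (((q' : ℕ)) + 1) % l.length = ((p : ℕ) + (t + 1)) % l.length := by
            simp [hq', Nat.mod_add_mod, Nat.add_assoc]
          have hedge := hr q'
          set v := l.get ⟨((q' : ℕ) + 1) % l.length, Nat.mod_lt _ q'.pos⟩ with hv
          have hcast : (⟨((q' : ℕ) + 1) % l.length, Nat.mod_lt _ q'.pos⟩ : Fin l.length) =
              ⟨((p : ℕ) + (t + 1)) % l.length, Nat.mod_lt _ hpos⟩ := Fin.ext hsucc
          rw [hw] at hedge
          match hv2 : v with
          | Sum.inl x' =>
              rcases hedge with hch | hS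
              · exact absurd hch (by simp [chainEdge])
              · exact Or.inl ⟨q', w, x', hw, hv.symm, by omega, hS⟩
          | Sum.inr u =>
              rcases hedge with hch | hS
              · right
                refine ⟨u, ?_, ?_⟩
                · rw [← hcast]; exact hv.symm
                · simp only [chainEdge] at hch; omega
              · rcases hH _ (hSH hS) with ⟨h1, -⟩ | ⟨-, h1⟩ <;> simp at h1
  rcases claim k with h | ⟨w, _, hzw⟩
  · exact h
  · exact absurd w.isLt (by omega)

lemma escape_left (hSH : S ⊆ H)
    (hH : ∀ e ∈ H, (e.1.isLeft = true ∧ e.2.isRight = true) ∨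
                   (e.1.isRight = true ∧ e.2.isLeft = true))
    {l : List (Fin m ⊕ Fin k)}
    (hr : ∀ i : Fin l.length, chainEdge (l.get i)
        (l.get ⟨((i : ℕ) + 1) % l.length, Nat.mod_lt _ i.pos⟩) ∨
      (l.get i, l.get ⟨((i : ℕ) + 1) % l.length, Nat.mod_lt _ i.pos⟩) ∈ S)
    (p : Fin l.length) (z : Fin m) (hp : l.get p = Sum.inl z) :
    ∃ (q : Fin l.length) (z' : Fin m) (x' : Fin k),
      l.get q = Sum.inl z' ∧
      l.get ⟨((q : ℕ) + 1) % l.length, Nat.mod_lt _ q.pos⟩ = Sum.inr x' ∧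
      (z : ℕ) ≤ z' ∧ (Sum.inl z', Sum.inr x') ∈ S := by
  have hpos : 0 < l.length := p.pos
  have claim : ∀ t : ℕ,
      (∃ (q : Fin l.length) (z' : Fin m) (x' : Fin k),
        l.get q = Sum.inl z' ∧
        l.get ⟨((q : ℕ) + 1) % l.length, Nat.mod_lt _ q.pos⟩ = Sum.inr x' ∧
        (z : ℕ) ≤ z' ∧ (Sum.inl z', Sum.inr x') ∈ S) ∨
      (∃ w : Fin m, l.get ⟨((p : ℕ) + t) % l.length, Nat.mod_lt _ hpos⟩ = Sum.inl w ∧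
        (z : ℕ) + t ≤ (w : ℕ)) := by
    intro t
    induction t with
    | zero =>
        right
        refine ⟨z, ?_, by omega⟩
        have he : (⟨((p : ℕ) + 0) % l.length, Nat.mod_lt _ hpos⟩ : Fin l.length) = p :=
          Fin.ext (by simpa using Nat.mod_eq_of_lt p.isLt)
        rw [he]; exact hp
    | succ t ih =>
        rcases ih with h | ⟨w, hw, hzw⟩
        · exact Or.inl h
        · set q' : Fin l.length := ⟨((p : ℕ) + t) % l.length, Nat.mod_lt _ hpos⟩ with hq'
          have hsucc : (((q' : ℕ)) + 1) % l.length = ((p : ℕ) + (t + 1)) % l.length := by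
            simp [hq', Nat.mod_add_mod, Nat.add_assoc]
          have hedge := hr q'
          set v := l.get ⟨((q' : ℕ) + 1) % l.length, Nat.mod_lt _ q'.pos⟩ with hv
          have hcast : (⟨((q' : ℕ) + 1) % l.length, Nat.mod_lt _ q'.pos⟩ : Fin l.length) =
              ⟨((p : ℕ) + (t + 1)) % l.length, Nat.mod_lt _ hpos⟩ := Fin.ext hsucc
          rw [hw] at hedge
          match hv2 : v with
          | Sum.inr x' =>
              rcases hedge with hch | hS
              · exact absurd hch (by simp [chainEdge])
              · exact Or.inl ⟨q', w, x', hw, hv.symm, by omega, hS⟩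
          | Sum.inl u =>
              rcases hedge with hch | hS
              · right
                refine ⟨u, ?_, ?_⟩
                · rw [← hcast]; exact hv.symm
                · simp only [chainEdge] at hch; omega
              · rcases hH _ (hSH hS) with ⟨-, h1⟩ | ⟨h1, -⟩ <;> simp at h1
  rcases claim m with h | ⟨w, _, hzw⟩
  · exact h
  · exact absurd w.isLt (by omega)


end Escape

lemma crosses_explicit {m k : ℕ} (x x' : Fin m) (y y' : Fin k)
    (hx : (x' : ℕ) ≤ x) (hy : (y : ℕ) ≤ y') :
    Crosses (Sum.inl x, Sum.inr y) ((Sum.inr y', Sum.inl x') :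
      (Fin m ⊕ Fin k) × (Fin m ⊕ Fin k)) := by
  set L1 : ℕ := (x : ℕ) - x' + 1 with hL1
  set n : ℕ := L1 + ((y' : ℕ) - y + 1) with hndef
  have hn : 0 < n := by omega
  have hxm : (x : ℕ) < m := x.isLt
  have hyk : (y' : ℕ) < k := y'.isLt
  refine ⟨List.ofFn (n := n) (fun i =>
    if h : (i : ℕ) < L1 then Sum.inl ⟨(x' : ℕ) + i, by omega⟩
    else Sum.inr ⟨(y : ℕ) + ((i : ℕ) - L1), by
      have := i.isLt; omega⟩), isCycle_ofFn _ hn _ ?_ ?_⟩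
  · intro i j hij
    dsimp only at hij
    by_cases hi : (i : ℕ) < L1 <;> by_cases hj : (j : ℕ) < L1
    · rw [dif_pos hi, dif_pos hj] at hij
      have := Fin.mk.injEq .. ▸ Sum.inl.inj hij
      have h' : (x' : ℕ) + i = (x' : ℕ) + j := Fin.mk.inj_iff.mp (Sum.inl.inj hij)
      exact Fin.ext (by omega)
    · rw [dif_pos hi, dif_neg hj] at hij; exact absurd hij (by simp)
    · rw [dif_neg hi, dif_pos hj] at hij; exact absurd hij (by simp)
    · rw [dif_neg hi, dif_neg hj] at hij
      have h' : (y : ℕ) + ((i : ℕ) - L1) = (y : ℕ) + ((j : ℕ) - L1) :=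
        Fin.mk.inj_iff.mp (Sum.inr.inj hij)
      have := i.isLt; have := j.isLt
      exact Fin.ext (by omega)
  · intro i
    dsimp only
    have hlt := i.isLt
    by_cases h1 : (i : ℕ) + 1 < L1
    · have hi : (i : ℕ) < L1 := by omega
      have hmod : ((i : ℕ) + 1) % n = (i : ℕ) + 1 := Nat.mod_eq_of_lt (by omega)
      left
      simp only [hmod, hi, h1, dif_pos]
      simp [chainEdge]; omega
    · by_cases h2 : (i : ℕ) + 1 = L1
      · have hi : (i : ℕ) < L1 := by omega
        have hmod : ((i : ℕ) + 1) % n = (i : ℕ) + 1 := Nat.mod_eq_of_lt (by omega)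
        right; left
        simp only [hmod, hi, dif_pos]
        rw [dif_neg (by omega)]
        have hxi : (x' : ℕ) + (i : ℕ) = (x : ℕ) := by omega
        have hyi : (y : ℕ) + ((i : ℕ) + 1 - L1) = (y : ℕ) := by omega
        simp [Prod.ext_iff, Fin.ext_iff, hxi, hyi]
      · by_cases h3 : (i : ℕ) + 1 < n
        · have hi : ¬ (i : ℕ) < L1 := by omega
          have hmod : ((i : ℕ) + 1) % n = (i : ℕ) + 1 := Nat.mod_eq_of_lt h3
          left
          simp only [hmod, hi, dif_neg, not_false_iff]
          rw [dif_neg (by omega)]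
          simp [chainEdge]; omega
        · have h4 : (i : ℕ) + 1 = n := by omega
          have hi : ¬ (i : ℕ) < L1 := by omega
          have hmod : ((i : ℕ) + 1) % n = 0 := by rw [h4]; exact Nat.mod_self n
          right; right
          simp only [hmod]
          rw [dif_neg hi, dif_pos (by omega : (0 : ℕ) < L1)]
          have hyi : (y : ℕ) + ((i : ℕ) - L1) = (y' : ℕ) := by omega
          simp [Prod.ext_iff, Fin.ext_iff, hyi]

lemma crossing_of_cycle {m k : ℕ} {S H : Finset ((Fin m ⊕ Fin k) × (Fin m ⊕ Fin k))}
    (hSH : S ⊆ H)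
    (hH : ∀ e ∈ H, (e.1.isLeft = true ∧ e.2.isRight = true) ∨
                   (e.1.isRight = true ∧ e.2.isLeft = true))
    {l : List (Fin m ⊕ Fin k)}
    (hc : IsCycle (fun a b => chainEdge a b ∨ (a, b) ∈ S) l) :
    ∃ h₁ ∈ S, ∃ h₂ ∈ S, Crosses h₁ h₂ := by
  classical
  obtain ⟨hne, hnd, hr⟩ := hc
  have hr' : ∀ i : Fin l.length, chainEdge (l.get i)
      (l.get ⟨((i : ℕ) + 1) % l.length, Nat.mod_lt _ i.pos⟩) ∨
      (l.get i, l.get ⟨((i : ℕ) + 1) % l.length, Nat.mod_lt _ i.pos⟩) ∈ S := hr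
  have hpos : 0 < l.length := List.length_pos_iff_ne_nil.mpr hne
  set F : Finset (Fin l.length) := Finset.univ.filter (fun q =>
    (l.get q).isLeft = true ∧
    (l.get ⟨((q : ℕ) + 1) % l.length, Nat.mod_lt _ q.pos⟩).isRight = true) with hF
  have hFmem : ∀ q : Fin l.length, q ∈ F ↔ (l.get q).isLeft = true ∧
      (l.get ⟨((q : ℕ) + 1) % l.length, Nat.mod_lt _ q.pos⟩).isRight = true := by
    intro q; simp [hF]
  have hFne : F.Nonempty := by
    have step : ∀ (p : Fin l.length) (z : Fin m), l.get p = Sum.inl z → F.Nonempty := by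
      intro p z hp
      obtain ⟨q, z', x', hq, hq1, -, -⟩ := escape_left hSH hH hr' p z hp
      exact ⟨q, (hFmem q).mpr ⟨by rw [hq]; rfl, by rw [hq1]; rfl⟩⟩
    rcases hv0 : l.get ⟨0, hpos⟩ with z | z
    · exact step _ _ hv0
    · obtain ⟨q, z', x', hq, hq1, -, -⟩ := escape_right hSH hH hr' ⟨0, hpos⟩ z hv0
      exact step _ _ hq1
  set g : Fin l.length → ℕ := fun q => Sum.elim (fun a : Fin m => (a : ℕ)) (fun _ => 0) (l.get q)
    with hg
  obtain ⟨q₀, hq₀F, hmax⟩ := Finset.exists_max_image F g hFne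
  obtain ⟨hL, hR⟩ := (hFmem q₀).mp hq₀F
  obtain ⟨x, hx⟩ := Sum.isLeft_iff.mp hL
  obtain ⟨y, hy⟩ := Sum.isRight_iff.mp hR
  have hS1 : (Sum.inl x, Sum.inr y) ∈ S := by
    rcases hr' q₀ with hch | hS
    · rw [hx, hy] at hch; exact absurd hch (by simp [chainEdge])
    · rwa [hx, hy] at hS
  obtain ⟨q₁, y', x', hq₁, hq₁1, hyy', hS2⟩ := escape_right hSH hH hr' _ y hy
  obtain ⟨q₂, x₁, y₁, hq₂, hq₂1, hxx₁, -⟩ := escape_left hSH hH hr' _ x' hq₁1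
  have hq₂F : q₂ ∈ F := (hFmem q₂).mpr ⟨by rw [hq₂]; rfl, by rw [hq₂1]; rfl⟩
  have hgle : g q₂ ≤ g q₀ := hmax q₂ hq₂F
  rw [hg] at hgle
  simp only [hx, hq₂, Sum.elim_inl] at hgle
  exact ⟨(Sum.inl x, Sum.inr y), hS1, (Sum.inr y', Sum.inl x'), hS2,
    crosses_explicit x x' y y' (le_trans hxx₁ hgle) hyy'⟩

/-- a subset `S ⊆ H` of horizontal edges is safely updatable iff it
is an independent set in the crossing graph `G'`; consequently, the maximum size
of a safely updatable subset of `H` equals `|H|` minus the minimum size of a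
vertex cover of `G'`. -/
theorem safe_iff_independent_and_duality (m k : ℕ)
    (H : Finset ((Fin m ⊕ Fin k) × (Fin m ⊕ Fin k)))
    (hH : ∀ e ∈ H, (e.1.isLeft = true ∧ e.2.isRight = true) ∨
                   (e.1.isRight = true ∧ e.2.isLeft = true)) :
    (∀ S ⊆ H, (Safe S ↔ ∀ h₁ ∈ S, ∀ h₂ ∈ S, ¬ Crosses h₁ h₂)) ∧
    sSup {n : ℕ | ∃ S ⊆ H, Safe S ∧ S.card = n} =
      H.card - sInf {n : ℕ | ∃ T ⊆ H,
        (∀ h₁ ∈ H, ∀ h₂ ∈ H, Crosses h₁ h₂ → h₁ ∈ T ∨ h₂ ∈ T) ∧ T.card = n} := by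
  classical
  have key : ∀ S ⊆ H, (Safe S ↔ ∀ h₁ ∈ S, ∀ h₂ ∈ S, ¬ Crosses h₁ h₂) := by
    intro S hSH
    constructor
    · rintro hsafe h₁ hS1 h₂ hS2 ⟨l, hcyc⟩
      refine hsafe l (isCycle_mono (fun a b hab => ?_) hcyc)
      rcases hab with hch | he | he
      · exact Or.inl hch
      · exact Or.inr (he ▸ hS1)
      · exact Or.inr (he ▸ hS2)
    · intro hind l hcyc
      obtain ⟨h₁, hS1, h₂, hS2, hcr⟩ := crossing_of_cycle hSH hH hcyc
      exact hind h₁ hS1 h₂ hS2 hcr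
  refine ⟨key, ?_⟩
  set B : Set ℕ := {n : ℕ | ∃ T ⊆ H,
    (∀ h₁ ∈ H, ∀ h₂ ∈ H, Crosses h₁ h₂ → h₁ ∈ T ∨ h₂ ∈ T) ∧ T.card = n} with hB
  set A : Set ℕ := {n : ℕ | ∃ S ⊆ H, Safe S ∧ S.card = n} with hA
  have hBne : B.Nonempty := ⟨H.card, H, subset_rfl, fun h₁ h1 _ _ _ => Or.inl h1, rfl⟩
  have hcB : sInf B ∈ B := Nat.sInf_mem hBne
  obtain ⟨T, hTH, hTcov, hTcard⟩ := hcB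
  have hAub : ∀ n ∈ A, n ≤ H.card - sInf B := by
    rintro n ⟨S, hSH', hsafe, rfl⟩
    have hind := (key S hSH').mp hsafe
    have hcov : H.card - S.card ∈ B := by
      refine ⟨H \ S, Finset.sdiff_subset, fun h₁ h1 h₂ h2 hcr => ?_, Finset.card_sdiff_of_subset hSH'⟩
      by_contra hcon
      push_neg at hcon
      obtain ⟨hc1, hc2⟩ := hcon
      have hs1 : h₁ ∈ S := by
        by_contra h; exact hc1 (Finset.mem_sdiff.mpr ⟨h1, h⟩)
      have hs2 : h₂ ∈ S := by
        by_contra h; exact hc2 (Finset.mem_sdiff.mpr ⟨h2, h⟩)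
      exact hind h₁ hs1 h₂ hs2 hcr
    have h1 := Nat.sInf_le hcov
    have h2 : S.card ≤ H.card := Finset.card_le_card hSH'
    omega
  have hmem : H.card - sInf B ∈ A := by
    refine ⟨H \ T, Finset.sdiff_subset, (key _ Finset.sdiff_subset).mpr ?_, ?_⟩
    · intro h₁ h1 h₂ h2 hcr
      obtain ⟨h1H, h1T⟩ := Finset.mem_sdiff.mp h1
      obtain ⟨h2H, h2T⟩ := Finset.mem_sdiff.mp h2
      rcases hTcov h₁ h1H h₂ h2H hcr with ht | ht
      · exact h1T ht
      · exact h2T ht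
    · rw [Finset.card_sdiff_of_subset hTH, hTcard]
  exact le_antisymm (csSup_le ⟨_, hmem⟩ hAub) (le_csSup ⟨_, hAub⟩ hmem)
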